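/- Let k ≥ 2 and let ρ be a permutation of {1,…,k} that fixes both k−1 and k. Let α and β be permutations of {1,…,k}, each fixing the point k and each having the same cycle type as ρ. Then the number of permutations π of {1,…,k} with π(k) = k−1 and π⁻¹ ∘ ρ ∘ π = α equals the number of permutations π of {1,…,k} with π(k) = k−1 and π⁻¹ ∘ ρ ∘ π = β. -/
import Mathlib


/-- Conjugates of a permutation `ρ` of `{1,…,k}` fixing `k-1` and `k` are uniformly
distributed: for any two permutations `α`, `β` fixing `k` with the same cycle type as `ρ`,
the number of permutations `π` with `π k = k - 1` conjugating `ρ` to `α` equals the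
number conjugating `ρ` to `β`. -/
theorem stmt_10 (k : ℕ) (hk : 2 ≤ k) (ρ α β : Equiv.Perm (Set.Icc 1 k))
    (K K' : Set.Icc 1 k) (hK : (K : ℕ) = k) (hK' : (K' : ℕ) = k - 1)
    (hρK : ρ K = K) (hρK' : ρ K' = K')
    (hαK : α K = K) (hβK : β K = K)
    (hα : α.cycleType = ρ.cycleType) (hβ : β.cycleType = ρ.cycleType) :
    Set.ncard {π : Equiv.Perm (Set.Icc 1 k) | π K = K' ∧ π⁻¹ * ρ * π = α} =
      Set.ncard {π : Equiv.Perm (Set.Icc 1 k) | π K = K' ∧ π⁻¹ * ρ * π = β} := by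
  -- α and β are conjugate
  have hconj : IsConj α β := Equiv.Perm.isConj_iff_cycleType_eq.mpr (hα.trans hβ.symm)
  obtain ⟨c, hcab⟩ := isConj_iff.mp hconj
  -- hcab : c * α * c⁻¹ = β
  -- α fixes c⁻¹ K
  have hαcK : α (c⁻¹ K) = c⁻¹ K := by
    have h1 : (c * α * c⁻¹) K = K := by rw [hcab, hβK]
    have h2 : c (α (c⁻¹ K)) = K := h1
    calc α (c⁻¹ K) = c⁻¹ (c (α (c⁻¹ K))) := by simp
    _ = c⁻¹ K := by rw [h2]
  set s : Equiv.Perm (Set.Icc 1 k) := Equiv.swap K (c⁻¹ K) with hs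
  have hss : s * s = 1 := Equiv.swap_mul_self _ _
  -- s commutes with α since it swaps two fixed points
  have hsα : α * s * α⁻¹ = s := by
    have := (Equiv.swap_apply_apply α K (c⁻¹ K)).symm
    rw [hαK, hαcK] at this
    exact this
  have hcomm : α * s = s * α := by
    calc α * s = (α * s * α⁻¹) * α := by group
    _ = s * α := by rw [hsα]
  set σ : Equiv.Perm (Set.Icc 1 k) := s * c⁻¹ with hσ
  have hσK : σ K = K := by
    show s (c⁻¹ K) = K
    simp [hs, Equiv.swap_apply_right]
  have hσconj : σ⁻¹ * α * σ = β := by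
    have hsαs : s * α * s = α := by
      rw [← hcomm, mul_assoc, hss, mul_one]
    have hσinv : σ⁻¹ = c * s := by
      rw [hσ, hs, mul_inv_rev, inv_inv, Equiv.swap_inv]
    calc σ⁻¹ * α * σ = c * (s * α * s) * c⁻¹ := by
          rw [hσinv, hσ]; group
    _ = c * α * c⁻¹ := by rw [hsαs]
    _ = β := hcab
  -- bijection π ↦ π * σ
  have himg : (fun π => π * σ) '' {π : Equiv.Perm (Set.Icc 1 k) | π K = K' ∧ π⁻¹ * ρ * π = α}
      = {π : Equiv.Perm (Set.Icc 1 k) | π K = K' ∧ π⁻¹ * ρ * π = β} := by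
    ext π
    simp only [Set.mem_image, Set.mem_setOf_eq]
    constructor
    · rintro ⟨τ, ⟨h1, h2⟩, rfl⟩
      refine ⟨?_, ?_⟩
      · show τ (σ K) = K'
        rw [hσK]; exact h1
      · rw [← hσconj, ← h2]; group
    · rintro ⟨h1, h2⟩
      refine ⟨π * σ⁻¹, ⟨?_, ?_⟩, by group⟩
      · show π (σ⁻¹ K) = K'
        have hinv : σ⁻¹ K = K := by
          conv_lhs => rw [← hσK]
          simp
        rw [hinv]; exact h1
      · have hback : α = σ * β * σ⁻¹ := by rw [← hσconj]; group
        rw [hback, ← h2]; group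
  rw [← himg]
  exact (Set.ncard_image_of_injective _ (mul_left_injective σ)).symm
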